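/- (Velocity and pressure-seminorm stability for the six-step BDF method.) Let q = 6. There exists a constant C > 0 (absolute) such that for every abstract fully discrete Stokes setting, every time step τ > 0, every integer N ≥ 6, all data f^6, …, f^N ∈ H, all starting values u^0, …, u^5 ∈ V_h, and every fully discrete solution (u^n, p^n)_{n=6}^N: ‖u^N‖_H² + τ ∑_{n=6}^N ‖u^n‖_V² + τ ∑_{n=6}^N |p^n|_j² ≤ C [ ∑_{i=0}^{5} ‖u^i‖_H² + (c_P²/ν) τ ∑_{n=6}^N ‖f^n‖_H² ]. -/

import Mathlib

open scoped RealInnerProductSpace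

/-- The BDF-q coefficients `δ_0, …, δ_q`, defined by
`∑_{i=0}^q δ_i ζ^i = ∑_{l=1}^q (1/l)(1 − ζ)^l`. -/
noncomputable def bdfCoeff (q i : ℕ) : ℝ :=
  (∑ l ∈ Finset.Icc 1 q, Polynomial.C ((l : ℝ)⁻¹) * (1 - Polynomial.X) ^ l).coeff i

theorem bdf6_val (i : ℕ) (hi : i < 7) : bdfCoeff 6 i =
    [(49/20 : ℝ), -6, 15/2, -20/3, 15/4, -6/5, 1/6].get ⟨i, hi⟩ := by
  unfold bdfCoeff
  rw [show Finset.Icc 1 6 = ({1,2,3,4,5,6} : Finset ℕ) from by decide,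
    Finset.sum_insert (by decide), Finset.sum_insert (by decide), Finset.sum_insert (by decide),
    Finset.sum_insert (by decide), Finset.sum_insert (by decide), Finset.sum_singleton,
    show ((1-Polynomial.X : Polynomial ℝ)^1) = 1 - Polynomial.X from by ring,
    show ((1-Polynomial.X : Polynomial ℝ)^2) = 1 - 2*Polynomial.X + Polynomial.X^2 from by ring,
    show ((1-Polynomial.X : Polynomial ℝ)^3) = 1 - 3*Polynomial.X + 3*Polynomial.X^2 - Polynomial.X^3 from by ring,
    show ((1-Polynomial.X : Polynomial ℝ)^4) = 1 - 4*Polynomial.X + 6*Polynomial.X^2 - 4*Polynomial.X^3 + Polynomial.X^4 from by ring,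
    show ((1-Polynomial.X : Polynomial ℝ)^5) = 1 - 5*Polynomial.X + 10*Polynomial.X^2 - 10*Polynomial.X^3 + 5*Polynomial.X^4 - Polynomial.X^5 from by ring,
    show ((1-Polynomial.X : Polynomial ℝ)^6) = 1 - 6*Polynomial.X + 15*Polynomial.X^2 - 20*Polynomial.X^3 + 15*Polynomial.X^4 - 6*Polynomial.X^5 + Polynomial.X^6 from by ring]
  interval_cases i <;>
    norm_num [Polynomial.coeff_add, Polynomial.coeff_sub, Polynomial.coeff_C_mul,
      Polynomial.coeff_ofNat_mul, Polynomial.coeff_one, Polynomial.coeff_X, Polynomial.coeff_X_pow]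


noncomputable def phiB {M : Type*} [AddCommGroup M] [Module ℝ M]
    (B : M →ₗ[ℝ] M →ₗ[ℝ] ℝ) (v1 v2 v3 v4 v5 v6 : M) : ℝ :=
  (61/720) * B v1 v1 + (-7/24) * B v1 v2 + (5/8) * B v1 v3 + (-37/45) * B v1 v4 + (37/60) * B v1 v5 + (-133/360) * B v1 v6 + (1333/1800) * B v2 v2 + (-1291/360) * B v2 v3 + (193/40) * B v2 v4 + (-81/20) * B v2 v5 + (149/72) * B v2 v6 + (3061/600) * B v3 v3 + (-1037/72) * B v3 v4 + (4529/360) * B v3 v5 + (-475/72) * B v3 v6 + (39211/3600) * B v4 v4 + (-3583/180) * B v4 v5 + (307/30) * B v4 v6 + (8909/900) * B v5 v5 + (-476/45) * B v5 v6 + (1891/600) * B v6 v6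

noncomputable def psiB {M : Type*} [AddCommGroup M] [Module ℝ M]
    (B : M →ₗ[ℝ] M →ₗ[ℝ] ℝ) (w1 w2 w3 : M) : ℝ :=
  (11/72) * B w1 w1 + (-17/45) * B w1 w2 + (23/72) * B w1 w3 + (323/720) * B w2 w2 + (-38/45) * B w2 w3 + (481/720) * B w3 w3

theorem cert1 {M : Type*} [AddCommGroup M] [Module ℝ M] (B : M →ₗ[ℝ] M →ₗ[ℝ] ℝ)
    (hsym : ∀ x y : M, B x y = B y x) (hpos : ∀ x : M, 0 ≤ B x x)
    (v0 v1 v2 v3 v4 v5 v6 : M) : phiB B v1 v2 v3 v4 v5 v6 - phiB B v0 v1 v2 v3 v4 v5 ≤ 2 * B ((49/20 : ℝ) • v6 + (-6 : ℝ) • v5 + (15/2 : ℝ) • v4 + (-20/3 : ℝ) • v3 + (15/4 : ℝ) • v2 + (-6/5 : ℝ) • v1 + (1/6 : ℝ) • v0) ((1 : ℝ) • v6 + (-5/4 : ℝ) • v5 + (4/5 : ℝ) • v4 + (-1/3 : ℝ) • v3) := by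
  have h0 := hpos ((1 : ℝ) • v0 + (-105/61 : ℝ) • v1 + (225/61 : ℝ) • v2 + (-336/61 : ℝ) • v3 + (318/61 : ℝ) • v4 + (-283/61 : ℝ) • v5 + (120/61 : ℝ) • v6)
  have h1 := hpos ((0 : ℝ) • v0 + (1 : ℝ) • v1 + (-243605/88896 : ℝ) • v2 + (15525/3704 : ℝ) • v3 + (-99569/22224 : ℝ) • v4 + (85085/22224 : ℝ) • v5 + (-159955/88896 : ℝ) • v6)
  have h2 := hpos ((0 : ℝ) • v0 + (0 : ℝ) • v1 + (1 : ℝ) • v2 + (-18397224/10788535 : ℝ) • v3 + (17837356/10788535 : ℝ) • v4 + (-16916092/10788535 : ℝ) • v5 + (1337485/2157707 : ℝ) • v6)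
  have h3 := hpos ((0 : ℝ) • v0 + (0 : ℝ) • v1 + (0 : ℝ) • v2 + (1 : ℝ) • v3 + (-582375691/484859599 : ℝ) • v4 + (373461397/484859599 : ℝ) • v5 + (-275945305/484859599 : ℝ) • v6)
  have h4 := hpos ((0 : ℝ) • v0 + (0 : ℝ) • v1 + (0 : ℝ) • v2 + (0 : ℝ) • v3 + (1 : ℝ) • v4 + (-1431390725/1691061824 : ℝ) • v5 + (-259671099/1691061824 : ℝ) • v6)
  have h5 := hpos ((0 : ℝ) • v0 + (0 : ℝ) • v1 + (0 : ℝ) • v2 + (0 : ℝ) • v3 + (0 : ℝ) • v4 + (1 : ℝ) • v5 + (-1 : ℝ) • v6)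
  have key : (2 * B ((49/20 : ℝ) • v6 + (-6 : ℝ) • v5 + (15/2 : ℝ) • v4 + (-20/3 : ℝ) • v3 + (15/4 : ℝ) • v2 + (-6/5 : ℝ) • v1 + (1/6 : ℝ) • v0) ((1 : ℝ) • v6 + (-5/4 : ℝ) • v5 + (4/5 : ℝ) • v4 + (-1/3 : ℝ) • v3)) - (phiB B v1 v2 v3 v4 v5 v6 - phiB B v0 v1 v2 v3 v4 v5) = (61/720) * B ((1 : ℝ) • v0 + (-105/61 : ℝ) • v1 + (225/61 : ℝ) • v2 + (-336/61 : ℝ) • v3 + (318/61 : ℝ) • v4 + (-283/61 : ℝ) • v5 + (120/61 : ℝ) • v6) ((1 : ℝ) • v0 + (-105/61 : ℝ) • v1 + (225/61 : ℝ) • v2 + (-336/61 : ℝ) • v3 + (318/61 : ℝ) • v4 + (-283/61 : ℝ) • v5 + (120/61 : ℝ) • v6) + (1852/4575) * B ((0 : ℝ) • v0 + (1 : ℝ) • v1 + (-243605/88896 : ℝ) • v2 + (15525/3704 : ℝ) • v3 + (-99569/22224 : ℝ) • v4 + (85085/22224 : ℝ) • v5 + (-159955/88896 : ℝ) • v6)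 ((0 : ℝ) • v0 + (1 : ℝ) • v1 + (-243605/88896 : ℝ) • v2 + (15525/3704 : ℝ) • v3 + (-99569/22224 : ℝ) • v4 + (85085/22224 : ℝ) • v5 + (-159955/88896 : ℝ) • v6) + (2157707/12801024) * B ((0 : ℝ) • v0 + (0 : ℝ) • v1 + (1 : ℝ) • v2 + (-18397224/10788535 : ℝ) • v3 + (17837356/10788535 : ℝ) • v4 + (-16916092/10788535 : ℝ) • v5 + (1337485/2157707 : ℝ) • v6) ((0 : ℝ) • v0 + (0 : ℝ) • v1 + (1 : ℝ) • v2 + (-18397224/10788535 : ℝ) • v3 + (17837356/10788535 : ℝ) • v4 + (-16916092/10788535 : ℝ) • v5 + (1337485/2157707 : ℝ) • v6) + (484859599/7767745200) * B ((0 : ℝ) • v0 + (0 : ℝ) • v1 + (0 : ℝ) • v2 + (1 : ℝ) • v3 + (-582375691/484859599 : ℝ) • v4 + (373461397/484859599 : ℝ) • v5 + (-275945305/484859599 : ℝ) • v6) ((0 : ℝ) • v0 + (0 : ℝ) • v1 + (0 : ℝ) • v2 + (1 : ℝ) • v3 + (-582375691/484859599 : ℝ) • v4 + (373461397/484859599 :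 ℝ) • v5 + (-275945305/484859599 : ℝ) • v6) + (3065049556/109093409775) * B ((0 : ℝ) • v0 + (0 : ℝ) • v1 + (0 : ℝ) • v2 + (0 : ℝ) • v3 + (1 : ℝ) • v4 + (-1431390725/1691061824 : ℝ) • v5 + (-259671099/1691061824 : ℝ) • v6) ((0 : ℝ) • v0 + (0 : ℝ) • v1 + (0 : ℝ) • v2 + (0 : ℝ) • v3 + (1 : ℝ) • v4 + (-1431390725/1691061824 : ℝ) • v5 + (-259671099/1691061824 : ℝ) • v6) + (29448203617/1217564513280) * B ((0 : ℝ) • v0 + (0 : ℝ) • v1 + (0 : ℝ) • v2 + (0 : ℝ) • v3 + (0 : ℝ) • v4 + (1 : ℝ) • v5 + (-1 : ℝ) • v6) ((0 : ℝ) • v0 + (0 : ℝ) • v1 + (0 : ℝ) • v2 + (0 : ℝ) • v3 + (0 : ℝ) • v4 + (1 : ℝ) • v5 + (-1 : ℝ) • v6) := by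
    simp only [phiB, psiB, map_add, map_smul, LinearMap.add_apply, LinearMap.smul_apply, smul_eq_mul]
    simp only [hsym v1 v0, hsym v2 v0, hsym v2 v1, hsym v3 v0, hsym v3 v1, hsym v3 v2, hsym v4 v0, hsym v4 v1, hsym v4 v2, hsym v4 v3, hsym v5 v0, hsym v5 v1, hsym v5 v2, hsym v5 v3, hsym v5 v4, hsym v6 v0, hsym v6 v1, hsym v6 v2, hsym v6 v3, hsym v6 v4, hsym v6 v5]
    ring
  linarith [h0, h1, h2, h3, h4, h5, key]

theorem cert2 {M : Type*} [AddCommGroup M] [Module ℝ M] (B : M →ₗ[ℝ] M →ₗ[ℝ] ℝ)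
    (hsym : ∀ x y : M, B x y = B y x) (hpos : ∀ x : M, 0 ≤ B x x)
    (w0 w1 w2 w3 : M) : (1/10) * B w3 w3 + psiB B w1 w2 w3 - psiB B w0 w1 w2 ≤ B w3 ((1 : ℝ) • w3 + (-5/4 : ℝ) • w2 + (4/5 : ℝ) • w1 + (-1/3 : ℝ) • w0) := by
  have h0 := hpos ((1 : ℝ) • w0 + (-68/55 : ℝ) • w1 + (23/22 : ℝ) • w2 + (-12/11 : ℝ) • w3)
  have h1 := hpos ((0 : ℝ) • w0 + (1 : ℝ) • w1 + (-1420/2467 : ℝ) • w2 + (1355/2467 : ℝ) • w3)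
  have h2 := hpos ((0 : ℝ) • w0 + (0 : ℝ) • w1 + (1 : ℝ) • w2 + (-31404/113047 : ℝ) • w3)
  have h3 := hpos ((0 : ℝ) • w0 + (0 : ℝ) • w1 + (0 : ℝ) • w2 + (1 : ℝ) • w3)
  have key : (B w3 ((1 : ℝ) • w3 + (-5/4 : ℝ) • w2 + (4/5 : ℝ) • w1 + (-1/3 : ℝ) • w0)) - ((1/10) * B w3 w3 + psiB B w1 w2 w3 - psiB B w0 w1 w2) = (11/72) * B ((1 : ℝ) • w0 + (-68/55 : ℝ) • w1 + (23/22 : ℝ) • w2 + (-12/11 : ℝ) • w3) ((1 : ℝ) • w0 + (-68/55 : ℝ) • w1 + (23/22 : ℝ) • w2 + (-12/11 : ℝ) • w3) + (2467/39600) * B ((0 : ℝ) • w0 + (1 : ℝ) • w1 + (-1420/2467 : ℝ) • w2 + (1355/2467 : ℝ) • w3) ((0 : ℝ) • w0 + (1 : ℝ) • w1 + (-1420/2467 : ℝ) • w2 + (1355/2467 : ℝ) • w3) + (113047/3552480) * B ((0 : ℝ) • w0 + (0 : ℝ) • w1 + (1 : ℝ) • w2 + (-31404/113047 : ℝ) •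 w3) ((0 : ℝ) • w0 + (0 : ℝ) • w1 + (1 : ℝ) • w2 + (-31404/113047 : ℝ) • w3) + (235039/8139384) * B ((0 : ℝ) • w0 + (0 : ℝ) • w1 + (0 : ℝ) • w2 + (1 : ℝ) • w3) ((0 : ℝ) • w0 + (0 : ℝ) • w1 + (0 : ℝ) • w2 + (1 : ℝ) • w3) := by
    simp only [phiB, psiB, map_add, map_smul, LinearMap.add_apply, LinearMap.smul_apply, smul_eq_mul]
    simp only [hsym w1 w0, hsym w2 w0, hsym w2 w1, hsym w3 w0, hsym w3 w1, hsym w3 w2]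
    ring
  linarith [h0, h1, h2, h3, key]

theorem cert3 {M : Type*} [AddCommGroup M] [Module ℝ M] (B : M →ₗ[ℝ] M →ₗ[ℝ] ℝ)
    (hsym : ∀ x y : M, B x y = B y x) (hpos : ∀ x : M, 0 ≤ B x x)
    (w0 w1 w2 w3 : M) : B ((1 : ℝ) • w3 + (-5/4 : ℝ) • w2 + (4/5 : ℝ) • w1 + (-1/3 : ℝ) • w0) ((1 : ℝ) • w3 + (-5/4 : ℝ) • w2 + (4/5 : ℝ) • w1 + (-1/3 : ℝ) • w0) ≤ (203/60) * ((1/3) * B w0 w0 + (4/5) * B w1 w1 + (5/4) * B w2 w2 + (1) * B w3 w3) := by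
  have h0 := hpos ((1 : ℝ) • w0 + (16/61 : ℝ) • w1 + (-25/61 : ℝ) • w2 + (20/61 : ℝ) • w3)
  have h1 := hpos ((0 : ℝ) • w0 + (1 : ℝ) • w1 + (5/9 : ℝ) • w2 + (-4/9 : ℝ) • w3)
  have h2 := hpos ((0 : ℝ) • w0 + (0 : ℝ) • w1 + (1 : ℝ) • w2 + (1 : ℝ) • w3)
  have key : ((203/60) * ((1/3) * B w0 w0 + (4/5) * B w1 w1 + (5/4) * B w2 w2 + (1) * B w3 w3)) - (B ((1 : ℝ) • w3 + (-5/4 : ℝ) • w2 + (4/5 : ℝ) • w1 + (-1/3 : ℝ) • w0) ((1 : ℝ) • w3 + (-5/4 : ℝ) • w2 + (4/5 : ℝ) • w1 + (-1/3 : ℝ) • w0)) = (61/60) * B ((1 : ℝ) • w0 + (16/61 : ℝ) • w1 + (-25/61 : ℝ) • w2 + (20/61 : ℝ) • w3) ((1 : ℝ) • w0 + (16/61 : ℝ) • w1 + (-25/61 : ℝ) • w2 + (20/61 : ℝ) • w3) + (609/305) * B ((0 : ℝ) • w0 + (1 : ℝ) • w1 + (5/9 : ℝ) • w2 + (-4/9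 : ℝ) • w3) ((0 : ℝ) • w0 + (1 : ℝ) • w1 + (5/9 : ℝ) • w2 + (-4/9 : ℝ) • w3) + (203/108) * B ((0 : ℝ) • w0 + (0 : ℝ) • w1 + (1 : ℝ) • w2 + (1 : ℝ) • w3) ((0 : ℝ) • w0 + (0 : ℝ) • w1 + (1 : ℝ) • w2 + (1 : ℝ) • w3) := by
    simp only [phiB, psiB, map_add, map_smul, LinearMap.add_apply, LinearMap.smul_apply, smul_eq_mul]
    simp only [hsym w1 w0, hsym w2 w0, hsym w2 w1, hsym w3 w0, hsym w3 w1, hsym w3 w2]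
    ring
  linarith [h0, h1, h2, key]

theorem cert4 {M : Type*} [AddCommGroup M] [Module ℝ M] (B : M →ₗ[ℝ] M →ₗ[ℝ] ℝ)
    (hsym : ∀ x y : M, B x y = B y x) (hpos : ∀ x : M, 0 ≤ B x x)
    (v1 v2 v3 v4 v5 v6 : M) : (1/100) * B v6 v6 ≤ phiB B v1 v2 v3 v4 v5 v6 := by
  have h0 := hpos ((1 : ℝ) • v1 + (-105/61 : ℝ) • v2 + (225/61 : ℝ) • v3 + (-296/61 : ℝ) • v4 + (222/61 : ℝ) • v5 + (-133/61 : ℝ) • v6)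
  have h1 := hpos ((0 : ℝ) • v1 + (1 : ℝ) • v2 + (-275630/107501 : ℝ) • v3 + (374385/107501 : ℝ) • v4 + (-328140/107501 : ℝ) • v5 + (157400/107501 : ℝ) • v6)
  have h2 := hpos ((0 : ℝ) • v1 + (0 : ℝ) • v2 + (1 : ℝ) • v3 + (-508445875/282837341 : ℝ) • v4 + (511514195/282837341 : ℝ) • v5 + (-301672750/282837341 : ℝ) • v6)
  have h3 := hpos ((0 : ℝ) • v1 + (0 : ℝ) • v2 + (0 : ℝ) • v3 + (1 : ℝ) • v4 + (-892601236645/608823404621 : ℝ) • v5 + (328702370930/608823404621 : ℝ) • v6)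
  have h4 := hpos ((0 : ℝ) • v1 + (0 : ℝ) • v2 + (0 : ℝ) • v3 + (0 : ℝ) • v4 + (1 : ℝ) • v5 + (-598046023266655/591792188646843 : ℝ) • v6)
  have h5 := hpos ((0 : ℝ) • v1 + (0 : ℝ) • v2 + (0 : ℝ) • v3 + (0 : ℝ) • v4 + (0 : ℝ) • v5 + (1 : ℝ) • v6)
  have key : (phiB B v1 v2 v3 v4 v5 v6) - ((1/100) * B v6 v6) = (61/720) * B ((1 : ℝ) • v1 + (-105/61 : ℝ) • v2 + (225/61 : ℝ) • v3 + (-296/61 : ℝ) • v4 + (222/61 : ℝ) • v5 + (-133/61 : ℝ) • v6) ((1 : ℝ) • v1 + (-105/61 : ℝ) • v2 + (225/61 : ℝ) • v3 + (-296/61 : ℝ) • v4 + (222/61 : ℝ) • v5 + (-133/61 : ℝ) • v6) + (107501/219600) * B ((0 : ℝ) • v1 + (1 : ℝ) • v2 + (-275630/107501 : ℝ) • v3 + (374385/107501 : ℝ) • v4 + (-328140/107501 : ℝ) • v5 + (157400/107501 : ℝ) • v6) ((0 : ℝ) • v1 + (1 : ℝ) • v2 + (-275630/107501 : ℝ) •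 v3 + (374385/107501 : ℝ) • v4 + (-328140/107501 : ℝ) • v5 + (157400/107501 : ℝ) • v6) + (282837341/387003600) * B ((0 : ℝ) • v1 + (0 : ℝ) • v2 + (1 : ℝ) • v3 + (-508445875/282837341 : ℝ) • v4 + (511514195/282837341 : ℝ) • v5 + (-301672750/282837341 : ℝ) • v6) ((0 : ℝ) • v1 + (0 : ℝ) • v2 + (1 : ℝ) • v3 + (-508445875/282837341 : ℝ) • v4 + (511514195/282837341 : ℝ) • v5 + (-301672750/282837341 : ℝ) • v6) + (608823404621/1018214427600) * B ((0 : ℝ) • v1 + (0 : ℝ) • v2 + (0 : ℝ) • v3 + (1 : ℝ) • v4 + (-892601236645/608823404621 : ℝ) • v5 + (328702370930/608823404621 : ℝ) • v6) ((0 : ℝ) • v1 + (0 : ℝ) • v2 + (0 : ℝ) • v3 + (1 : ℝ) • v4 + (-892601236645/608823404621 : ℝ) • v5 + (328702370930/608823404621 : ℝ) • v6) + (65754687627427/121764680924200) * B ((0 : ℝ) • v1 + (0 : ℝ) • v2 + (0 : ℝ) • v3 + (0 : ℝ) • v4 + (1 : ℝ) • v5 + (-598046023266655/591792188646843 : ℝ)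 • v6) ((0 : ℝ) • v1 + (0 : ℝ) • v2 + (0 : ℝ) • v3 + (0 : ℝ) • v4 + (1 : ℝ) • v5 + (-598046023266655/591792188646843 : ℝ) • v6) + (56352878532542809/426090375825726960) * B ((0 : ℝ) • v1 + (0 : ℝ) • v2 + (0 : ℝ) • v3 + (0 : ℝ) • v4 + (0 : ℝ) • v5 + (1 : ℝ) • v6) ((0 : ℝ) • v1 + (0 : ℝ) • v2 + (0 : ℝ) • v3 + (0 : ℝ) • v4 + (0 : ℝ) • v5 + (1 : ℝ) • v6) := by
    simp only [phiB, psiB, map_add, map_smul, LinearMap.add_apply, LinearMap.smul_apply, smul_eq_mul]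
    simp only [hsym v2 v1, hsym v3 v1, hsym v3 v2, hsym v4 v1, hsym v4 v2, hsym v4 v3, hsym v5 v1, hsym v5 v2, hsym v5 v3, hsym v5 v4, hsym v6 v1, hsym v6 v2, hsym v6 v3, hsym v6 v4, hsym v6 v5]
    ring
  linarith [h0, h1, h2, h3, h4, h5, key]

theorem cert5 {M : Type*} [AddCommGroup M] [Module ℝ M] (B : M →ₗ[ℝ] M →ₗ[ℝ] ℝ)
    (hsym : ∀ x y : M, B x y = B y x) (hpos : ∀ x : M, 0 ≤ B x x)
    (v1 v2 v3 v4 v5 v6 : M) : phiB B v1 v2 v3 v4 v5 v6 ≤ (60) * (B v1 v1 + B v2 v2 + B v3 v3 + B v4 v4 + B v5 v5 + B v6 v6) := by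
  have h0 := hpos ((1 : ℝ) • v1 + (105/43139 : ℝ) • v2 + (-225/43139 : ℝ) • v3 + (296/43139 : ℝ) • v4 + (-222/43139 : ℝ) • v5 + (133/43139 : ℝ) • v6)
  have h1 := hpos ((0 : ℝ) • v1 + (1 : ℝ) • v2 + (278580370/9202960301 : ℝ) • v3 + (-374817615/9202960301 : ℝ) • v4 + (314599860/9202960301 : ℝ) • v5 + (-160762600/9202960301 : ℝ) • v6)
  have h2 := hpos ((0 : ℝ) • v1 + (0 : ℝ) • v2 + (1 : ℝ) • v3 + (241078259645875/1816964857173859 : ℝ) • v4 + (-210485919410195/1816964857173859 : ℝ) • v5 + (110355236272750/1816964857173859 : ℝ) • v6)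
  have h3 := hpos ((0 : ℝ) • v1 + (0 : ℝ) • v2 + (0 : ℝ) • v3 + (1 : ℝ) • v4 + (10167027224469722765/44891822928530952203 : ℝ) • v5 + (-36643393654648653070/314242760499716665421 : ℝ) • v6)
  have h4 := hpos ((0 : ℝ) • v1 + (0 : ℝ) • v2 + (0 : ℝ) • v3 + (0 : ℝ) • v4 + (1 : ℝ) • v5 + (564007717057608248894665/3784121351779905195895251 : ℝ) • v6)
  have h5 := hpos ((0 : ℝ) • v1 + (0 : ℝ) • v2 + (0 : ℝ) • v3 + (0 : ℝ) • v4 + (0 : ℝ) • v5 + (1 : ℝ) • v6)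
  have key : ((60) * (B v1 v1 + B v2 v2 + B v3 v3 + B v4 v4 + B v5 v5 + B v6 v6)) - (phiB B v1 v2 v3 v4 v5 v6) = (43139/720) * B ((1 : ℝ) • v1 + (105/43139 : ℝ) • v2 + (-225/43139 : ℝ) • v3 + (296/43139 : ℝ) • v4 + (-222/43139 : ℝ) • v5 + (133/43139 : ℝ) • v6) ((1 : ℝ) • v1 + (105/43139 : ℝ) • v2 + (-225/43139 : ℝ) • v3 + (296/43139 : ℝ) • v4 + (-222/43139 : ℝ) • v5 + (133/43139 : ℝ) • v6) + (9202960301/155300400) * B ((0 : ℝ) • v1 + (1 : ℝ) • v2 + (278580370/9202960301 : ℝ) • v3 + (-374817615/9202960301 : ℝ) • v4 + (314599860/9202960301 : ℝ) • v5 + (-160762600/9202960301 : ℝ) • v6) ((0 : ℝ) • v1 + (1 : ℝ) • v2 + (278580370/9202960301 : ℝ) • v3 + (-374817615/9202960301 : ℝ) • v4 + (314599860/9202960301 : ℝ) • v5 + (-160762600/9202960301 : ℝ) • v6) + (1816964857173859/33130657083600) * B ((0 : ℝ) • v1 + (0 : ℝ) • v2 + (1 : ℝ) • v3 + (241078259645875/1816964857173859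 : ℝ) • v4 + (-210485919410195/1816964857173859 : ℝ) • v5 + (110355236272750/1816964857173859 : ℝ) • v6) ((0 : ℝ) • v1 + (0 : ℝ) • v2 + (1 : ℝ) • v3 + (241078259645875/1816964857173859 : ℝ) • v4 + (-210485919410195/1816964857173859 : ℝ) • v5 + (110355236272750/1816964857173859 : ℝ) • v6) + (314242760499716665421/6541073485825892400) * B ((0 : ℝ) • v1 + (0 : ℝ) • v2 + (0 : ℝ) • v3 + (1 : ℝ) • v4 + (10167027224469722765/44891822928530952203 : ℝ) • v5 + (-36643393654648653070/314242760499716665421 : ℝ) • v6) ((0 : ℝ) • v1 + (0 : ℝ) • v2 + (0 : ℝ) • v3 + (1 : ℝ) • v4 + (10167027224469722765/44891822928530952203 : ℝ) • v5 + (-36643393654648653070/314242760499716665421 : ℝ) • v6) + (420457927975545021766139/8978364585706190440600) * B ((0 : ℝ) • v1 + (0 : ℝ) • v2 + (0 : ℝ) • v3 + (0 : ℝ) • v4 + (1 : ℝ) • v5 + (564007717057608248894665/3784121351779905195895251 : ℝ) • v6) ((0 : ℝ) • v1 + (0 : ℝ) • v2 + (0 : ℝ) • v3 + (0 : ℝ)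 • v4 + (1 : ℝ) • v5 + (564007717057608248894665/3784121351779905195895251 : ℝ) • v6) + (5238480524560588385112423046793/95359858064853610936560325200) * B ((0 : ℝ) • v1 + (0 : ℝ) • v2 + (0 : ℝ) • v3 + (0 : ℝ) • v4 + (0 : ℝ) • v5 + (1 : ℝ) • v6) ((0 : ℝ) • v1 + (0 : ℝ) • v2 + (0 : ℝ) • v3 + (0 : ℝ) • v4 + (0 : ℝ) • v5 + (1 : ℝ) • v6) := by
    simp only [phiB, psiB, map_add, map_smul, LinearMap.add_apply, LinearMap.smul_apply, smul_eq_mul]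
    simp only [hsym v2 v1, hsym v3 v1, hsym v3 v2, hsym v4 v1, hsym v4 v2, hsym v4 v3, hsym v5 v1, hsym v5 v2, hsym v5 v3, hsym v5 v4, hsym v6 v1, hsym v6 v2, hsym v6 v3, hsym v6 v4, hsym v6 v5]
    ring
  linarith [h0, h1, h2, h3, h4, h5, key]

theorem cert6 {M : Type*} [AddCommGroup M] [Module ℝ M] (B : M →ₗ[ℝ] M →ₗ[ℝ] ℝ)
    (hsym : ∀ x y : M, B x y = B y x) (hpos : ∀ x : M, 0 ≤ B x x)
    (w1 w2 w3 : M) : psiB B w1 w2 w3 ≤ (5) * (B w1 w1 + B w2 w2 + B w3 w3) := by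
  have h0 := hpos ((1 : ℝ) • w1 + (68/1745 : ℝ) • w2 + (-23/698 : ℝ) • w3)
  have h1 := hpos ((0 : ℝ) • w1 + (1 : ℝ) • w2 + (538300/5709117 : ℝ) • w3)
  have h2 := hpos ((0 : ℝ) • w1 + (0 : ℝ) • w2 + (1 : ℝ) • w3)
  have key : ((5) * (B w1 w1 + B w2 w2 + B w3 w3)) - (psiB B w1 w2 w3) = (349/72) * B ((1 : ℝ) • w1 + (68/1745 : ℝ) • w2 + (-23/698 : ℝ) • w3) ((1 : ℝ) • w1 + (68/1745 : ℝ) • w2 + (-23/698 : ℝ) • w3) + (1903039/418800) * B ((0 : ℝ) • w1 + (1 : ℝ) • w2 + (538300/5709117 : ℝ) • w3) ((0 : ℝ) • w1 + (1 : ℝ) • w2 + (538300/5709117 : ℝ) • w3) + (35238092561/8221128480) * B ((0 : ℝ) • w1 + (0 : ℝ) • w2 + (1 : ℝ) • w3) ((0 : ℝ) • w1 + (0 : ℝ) • w2 + (1 : ℝ) • w3) := by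
    simp only [phiB, psiB, map_add, map_smul, LinearMap.add_apply, LinearMap.smul_apply, smul_eq_mul]
    simp only [hsym w2 w1, hsym w3 w1, hsym w3 w2]
    ring
  linarith [h0, h1, h2, key]

theorem cert7 {M : Type*} [AddCommGroup M] [Module ℝ M] (B : M →ₗ[ℝ] M →ₗ[ℝ] ℝ)
    (hsym : ∀ x y : M, B x y = B y x) (hpos : ∀ x : M, 0 ≤ B x x)
    (w1 w2 w3 : M) : (0 : ℝ) ≤ psiB B w1 w2 w3 := by
  have h0 := hpos ((1 : ℝ) • w1 + (-68/55 : ℝ) • w2 + (23/22 : ℝ) • w3)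
  have h1 := hpos ((0 : ℝ) • w1 + (1 : ℝ) • w2 + (-8900/8517 : ℝ) • w3)
  have h2 := hpos ((0 : ℝ) • w1 + (0 : ℝ) • w2 + (1 : ℝ) • w3)
  have key : (psiB B w1 w2 w3) - ((0 : ℝ)) = (11/72) * B ((1 : ℝ) • w1 + (-68/55 : ℝ) • w2 + (23/22 : ℝ) • w3) ((1 : ℝ) • w1 + (-68/55 : ℝ) • w2 + (23/22 : ℝ) • w3) + (2839/13200) * B ((0 : ℝ) • w1 + (1 : ℝ) • w2 + (-8900/8517 : ℝ) • w3) ((0 : ℝ) • w1 + (1 : ℝ) • w2 + (-8900/8517 : ℝ) • w3) + (3265039/12264480) * B ((0 : ℝ) • w1 + (0 : ℝ) • w2 + (1 : ℝ) • w3) ((0 : ℝ) • w1 + (0 : ℝ) • w2 + (1 : ℝ) • w3) := by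
    simp only [phiB, psiB, map_add, map_smul, LinearMap.add_apply, LinearMap.smul_apply, smul_eq_mul]
    simp only [hsym w2 w1, hsym w3 w1, hsym w3 w2]
    ring
  linarith [h0, h1, h2, key]


theorem stepLemma {M Q : Type*} [AddCommGroup M] [Module ℝ M] [AddCommGroup Q] [Module ℝ Q]
    (B a : M →ₗ[ℝ] M →ₗ[ℝ] ℝ) (bb : Q →ₗ[ℝ] M →ₗ[ℝ] ℝ) (jj : Q →ₗ[ℝ] Q →ₗ[ℝ] ℝ)
    (hsymB : ∀ x y : M, B x y = B y x) (hposB : ∀ x : M, 0 ≤ B x x)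
    (hsyma : ∀ x y : M, a x y = a y x) (hposa : ∀ x : M, 0 ≤ a x x)
    (hsymj : ∀ x y : Q, jj x y = jj y x) (hposj : ∀ x : Q, 0 ≤ jj x x)
    (τ φf : ℝ) (hτ : 0 < τ) (hφf : 0 ≤ φf) (Lf : M →ₗ[ℝ] ℝ)
    (v0 v1 v2 v3 v4 v5 v6 : M) (q0 q1 q2 q3 : Q)
    (heq : ∀ v : M, B ((49/20 : ℝ) • v6 + (-6 : ℝ) • v5 + (15/2 : ℝ) • v4 + (-20/3 : ℝ) • v3 + (15/4 : ℝ) • v2 + (-6/5 : ℝ) • v1 + (1/6 : ℝ) • v0) v + τ * a v6 v + τ * bb q3 v = τ * Lf v)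
    (hb3 : bb q3 v6 = jj q3 q3) (hb2 : bb q3 v5 = jj q3 q2)
    (hb1 : bb q3 v4 = jj q3 q1) (hb0 : bb q3 v3 = jj q3 q0)
    (hLf : ∀ v : M, Lf v ≤ φf * Real.sqrt (a v v)) :
    (1/2) * phiB B v1 v2 v3 v4 v5 v6 + τ * psiB a v4 v5 v6 + τ * psiB jj q1 q2 q3
      + τ * ((29029/864000) * a v6 v6 + (3451/216000) * a v5 v5 + (203/43200) * a v4 v4)
      + (45191/864000) * τ * (a v6 v6 + jj q3 q3)
    ≤ (1/2) * phiB B v0 v1 v2 v3 v4 v5 + τ * psiB a v3 v4 v5 + τ * psiB jj q0 q1 q2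
      + τ * ((29029/864000) * a v5 v5 + (3451/216000) * a v4 v4 + (203/43200) * a v3 v3)
      + 60 * τ * φf ^ 2 := by
  have he := heq ((1 : ℝ) • v6 + (-5/4 : ℝ) • v5 + (4/5 : ℝ) • v4 + (-1/3 : ℝ) • v3)
  have hbeq : bb q3 ((1 : ℝ) • v6 + (-5/4 : ℝ) • v5 + (4/5 : ℝ) • v4 + (-1/3 : ℝ) • v3) = jj q3 ((1 : ℝ) • q3 + (-5/4 : ℝ) • q2 + (4/5 : ℝ) • q1 + (-1/3 : ℝ) • q0) := by
    simp only [map_add, map_smul, smul_eq_mul]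
    rw [hb3, hb2, hb1, hb0]
  rw [hbeq] at he
  have c1 := cert1 B hsymB hposB v0 v1 v2 v3 v4 v5 v6
  have c2a := cert2 a hsyma hposa v3 v4 v5 v6
  have c2j := cert2 jj hsymj hposj q0 q1 q2 q3
  have hc2a := mul_le_mul_of_nonneg_left c2a hτ.le
  have hc2j := mul_le_mul_of_nonneg_left c2j hτ.le
  have hX : (0:ℝ) ≤ a ((1 : ℝ) • v6 + (-5/4 : ℝ) • v5 + (4/5 : ℝ) • v4 + (-1/3 : ℝ) • v3) ((1 : ℝ) • v6 + (-5/4 : ℝ) • v5 + (4/5 : ℝ) • v4 + (-1/3 : ℝ) • v3) := hposa _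
  have hs : Real.sqrt (a ((1 : ℝ) • v6 + (-5/4 : ℝ) • v5 + (4/5 : ℝ) • v4 + (-1/3 : ℝ) • v3) ((1 : ℝ) • v6 + (-5/4 : ℝ) • v5 + (4/5 : ℝ) • v4 + (-1/3 : ℝ) • v3)) ^ 2 = a ((1 : ℝ) • v6 + (-5/4 : ℝ) • v5 + (4/5 : ℝ) • v4 + (-1/3 : ℝ) • v3) ((1 : ℝ) • v6 + (-5/4 : ℝ) • v5 + (4/5 : ℝ) • v4 + (-1/3 : ℝ) • v3) := Real.sq_sqrt hX
  have hs0 : (0:ℝ) ≤ Real.sqrt (a ((1 : ℝ) • v6 + (-5/4 : ℝ) • v5 + (4/5 : ℝ) • v4 + (-1/3 : ℝ) • v3) ((1 : ℝ) • v6 + (-5/4 : ℝ) • v5 + (4/5 : ℝ) • v4 + (-1/3 : ℝ) • v3)) := Real.sqrt_nonneg _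
  have c3 := cert3 a hsyma hposa v3 v4 v5 v6
  have hY : Lf ((1 : ℝ) • v6 + (-5/4 : ℝ) • v5 + (4/5 : ℝ) • v4 + (-1/3 : ℝ) • v3) ≤ 60 * φf ^ 2 + (1/240) * ((203/60) * ((1/3) * a v3 v3 + (4/5) * a v4 v4 + (5/4) * a v5 v5 + (1) * a v6 v6)) := by
    have h1 := hLf ((1 : ℝ) • v6 + (-5/4 : ℝ) • v5 + (4/5 : ℝ) • v4 + (-1/3 : ℝ) • v3)
    nlinarith [sq_nonneg (120 * φf - Real.sqrt (a ((1 : ℝ) • v6 + (-5/4 : ℝ) • v5 + (4/5 : ℝ) • v4 + (-1/3 : ℝ) • v3) ((1 : ℝ) • v6 + (-5/4 : ℝ) • v5 + (4/5 : ℝ) • v4 + (-1/3 : ℝ) • v3)))]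
  have hYτ := mul_le_mul_of_nonneg_left hY hτ.le
  have hj0 : (0:ℝ) ≤ τ * jj q3 q3 := mul_nonneg hτ.le (hposj q3)
  linarith [c1, he, hc2a, hc2j, hYτ, hj0]

theorem startStep {M Q : Type*} [AddCommGroup M] [Module ℝ M] [AddCommGroup Q] [Module ℝ Q]
    (B a : M →ₗ[ℝ] M →ₗ[ℝ] ℝ) (bb : Q →ₗ[ℝ] M →ₗ[ℝ] ℝ) (jj : Q →ₗ[ℝ] Q →ₗ[ℝ] ℝ)
    (hsymB : ∀ x y : M, B x y = B y x) (hposB : ∀ x : M, 0 ≤ B x x)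
    (hsyma : ∀ x y : M, a x y = a y x) (hposa : ∀ x : M, 0 ≤ a x x)
    (hposj : ∀ x : Q, 0 ≤ jj x x)
    (τ φf : ℝ) (hτ : 0 < τ) (hφf : 0 ≤ φf) (Lf : M →ₗ[ℝ] ℝ)
    (v0 v1 v2 v3 v4 v5 v6 : M) (q3 : Q)
    (heq : ∀ v : M, B ((49/20 : ℝ) • v6 + (-6 : ℝ) • v5 + (15/2 : ℝ) • v4 + (-20/3 : ℝ) • v3 + (15/4 : ℝ) • v2 + (-6/5 : ℝ) • v1 + (1/6 : ℝ) • v0) v + τ * a v6 v + τ * bb q3 v = τ * Lf v)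
    (hb3 : bb q3 v6 = jj q3 q3)
    (hLf : ∀ v : M, Lf v ≤ φf * Real.sqrt (a v v)) :
    (49/40) * B v6 v6 + (τ/2) * a v6 v6 + τ * jj q3 q3
    ≤ (τ/2) * φf ^ 2 + (60/49) * ((36) * B v5 v5 + (225/4) * B v4 v4 + (400/9) * B v3 v3
        + (225/16) * B v2 v2 + (36/25) * B v1 v1 + (1/36) * B v0 v0) := by
  have he := heq v6
  rw [hb3] at he
  have hy1 := hposB ((49 : ℝ) • v6 + (-720 : ℝ) • v5)
  have hy2 := hposB ((49 : ℝ) • v6 + (900 : ℝ) • v4)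
  have hy3 := hposB ((49 : ℝ) • v6 + (-800 : ℝ) • v3)
  have hy4 := hposB ((49 : ℝ) • v6 + (450 : ℝ) • v2)
  have hy5 := hposB ((49 : ℝ) • v6 + (-144 : ℝ) • v1)
  have hy6 := hposB ((49 : ℝ) • v6 + (20 : ℝ) • v0)
  have hX : (0:ℝ) ≤ a v6 v6 := hposa _
  have hs : Real.sqrt (a v6 v6) ^ 2 = a v6 v6 := Real.sq_sqrt hX
  have hs0 : (0:ℝ) ≤ Real.sqrt (a v6 v6) := Real.sqrt_nonneg _
  have hY : Lf v6 ≤ (1/2) * φf ^ 2 + (1/2) * a v6 v6 := by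
    have h1 := hLf v6
    nlinarith [sq_nonneg (φf - Real.sqrt (a v6 v6))]
  have hYτ := mul_le_mul_of_nonneg_left hY hτ.le
  have hj := hposj q3
  simp only [map_add, map_smul, LinearMap.add_apply, LinearMap.smul_apply, smul_eq_mul] at he hy1 hy2 hy3 hy4 hy5 hy6
  simp only [hsymB v6 v5, hsymB v6 v4, hsymB v6 v3, hsymB v6 v2, hsymB v6 v1, hsymB v6 v0] at he hy1 hy2 hy3 hy4 hy5 hy6
  linarith [he, hy1, hy2, hy3, hy4, hy5, hy6, hYτ]


theorem bdf6v0 : bdfCoeff 6 0 = 49/20 := by simpa using bdf6_val 0 (by norm_num)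
theorem bdf6v1 : bdfCoeff 6 1 = -6 := by simpa using bdf6_val 1 (by norm_num)
theorem bdf6v2 : bdfCoeff 6 2 = 15/2 := by simpa using bdf6_val 2 (by norm_num)
theorem bdf6v3 : bdfCoeff 6 3 = -20/3 := by simpa using bdf6_val 3 (by norm_num)
theorem bdf6v4 : bdfCoeff 6 4 = 15/4 := by simpa using bdf6_val 4 (by norm_num)
theorem bdf6v5 : bdfCoeff 6 5 = -6/5 := by simpa using bdf6_val 5 (by norm_num)
theorem bdf6v6 : bdfCoeff 6 6 = 1/6 := by simpa using bdf6_val 6 (by norm_num)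

set_option maxHeartbeats 1000000 in
/-- Velocity and pressure-seminorm stability for the six-step BDF method.
There is an absolute constant `C > 0` such that, in every abstract fully discrete Stokes
setting, every fully discrete BDF-6 solution satisfies
`‖u^N‖_H² + τ ∑_{n=6}^N ‖u^n‖_V² + τ ∑_{n=6}^N |p^n|_j²
  ≤ C [ ∑_{i=0}^5 ‖u^i‖_H² + (c_P²/ν) τ ∑_{n=6}^N ‖f^n‖_H² ]`.
Here `‖v‖_V² = a(v,v)` and `|r|_j² = j(r,r)`. -/
theorem bdf6_velocity_stability :
    ∃ C : ℝ, 0 < C ∧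
      ∀ (H : Type*) [NormedAddCommGroup H] [InnerProductSpace ℝ H] [CompleteSpace H]
        (Vh : Submodule ℝ H)
        (Qh : Type*) [AddCommGroup Qh] [Module ℝ Qh]
        (a : Vh →ₗ[ℝ] Vh →ₗ[ℝ] ℝ),
        (∀ v w : Vh, a v w = a w v) →
        (∀ v : Vh, v ≠ 0 → 0 < a v v) →
        ∀ (ν cP : ℝ), 0 < ν → 0 < cP →
        (∀ v : Vh, ‖(v : H)‖ ≤ cP / Real.sqrt ν * Real.sqrt (a v v)) →
        ∀ (b : Qh →ₗ[ℝ] Vh →ₗ[ℝ] ℝ) (j : Qh →ₗ[ℝ] Qh →ₗ[ℝ] ℝ),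
        (∀ r s : Qh, j r s = j s r) →
        (∀ r : Qh, 0 ≤ j r r) →
        ∀ (τ : ℝ), 0 < τ → ∀ (N : ℕ), 6 ≤ N →
        ∀ (f : ℕ → H) (u : ℕ → Vh) (p : ℕ → Qh),
        (∀ n, 6 ≤ n → n ≤ N →
          (∀ v : Vh,
            ⟪(τ⁻¹ • ∑ i ∈ Finset.range 7, bdfCoeff 6 i • ((u (n - i) : H)) : H),
                (v : H)⟫
              + a (u n) v + b (p n) v = ⟪f n, (v : H)⟫) ∧
          (∀ r : Qh, b r (u n) = j r (p n))) →
        ‖(u N : H)‖ ^ 2 + τ * ∑ n ∈ Finset.Icc 6 N, a (u n) (u n)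
            + τ * ∑ n ∈ Finset.Icc 6 N, j (p n) (p n)
          ≤ C * (∑ i ∈ Finset.range 6, ‖(u i : H)‖ ^ 2
              + cP ^ 2 / ν * (τ * ∑ n ∈ Finset.Icc 6 N, ‖f n‖ ^ 2)) := by
  refine ⟨2000000000, by norm_num, ?_⟩
  intro H _ _ _ Vh Qh _ _ a hsyma hposa' ν cP hν hcP hPoin b j hsymj hposj τ hτ N hN f u p hsol
  have hposa : ∀ v : Vh, 0 ≤ a v v := by
    intro v
    rcases eq_or_ne v 0 with h|h
    · simp [h]
    · exact (hposa' v h).le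
  set BH : Vh →ₗ[ℝ] Vh →ₗ[ℝ] ℝ := LinearMap.mk₂ ℝ (fun v w => (inner ℝ ((v : Vh) : H) ((w : Vh) : H) : ℝ))
    (fun x y z => by push_cast; exact inner_add_left _ _ _)
    (fun c x y => by push_cast; exact real_inner_smul_left _ _ _)
    (fun x y z => by push_cast; exact inner_add_right _ _ _)
    (fun c x y => by push_cast; exact real_inner_smul_right _ _ _) with hBHdef
  have hBH : ∀ v w : Vh, BH v w = (inner ℝ ((v : Vh) : H) ((w : Vh) : H) : ℝ) := fun _ _ => rfl
  have hsymB : ∀ v w : Vh, BH v w = BH w v := fun v w => real_inner_comm _ _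
  have hposB : ∀ v : Vh, 0 ≤ BH v v := fun v => real_inner_self_nonneg
  set Lf : ℕ → (Vh →ₗ[ℝ] ℝ) := fun n =>
    { toFun := fun v => (inner ℝ (f n) ((v : Vh) : H) : ℝ),
      map_add' := fun x y => by push_cast; exact inner_add_right _ _ _,
      map_smul' := fun c x => by push_cast; exact real_inner_smul_right _ _ _ } with hLfdef
  have hLfapp : ∀ n (v : Vh), Lf n v = (inner ℝ (f n) ((v : Vh) : H) : ℝ) := fun _ _ => rfl
  set φf : ℕ → ℝ := fun n => cP / Real.sqrt ν * ‖f n‖ with hφfdef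
  have hsν : 0 < Real.sqrt ν := Real.sqrt_pos.mpr hν
  have hφf : ∀ n, 0 ≤ φf n := fun n => mul_nonneg (div_nonneg hcP.le hsν.le) (norm_nonneg _)
  have hLfb : ∀ n (v : Vh), Lf n v ≤ φf n * Real.sqrt (a v v) := by
    intro n v
    have h1 : Lf n v ≤ ‖f n‖ * ‖(v : H)‖ := by rw [hLfapp]; exact real_inner_le_norm _ _
    have h2 := mul_le_mul_of_nonneg_left (hPoin v) (norm_nonneg (f n))
    have h3 : ‖f n‖ * (cP / Real.sqrt ν * Real.sqrt (a v v)) = φf n * Real.sqrt (a v v) := by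
      rw [hφfdef]; ring
    linarith
  have hφsq : ∀ n, φf n ^ 2 = cP ^ 2 / ν * ‖f n‖ ^ 2 := by
    intro n; rw [hφfdef]; simp only [mul_pow, div_pow, Real.sq_sqrt hν.le]
  have heqn : ∀ n, 6 ≤ n → n ≤ N → ∀ v : Vh,
      BH ((49/20 : ℝ) • u n + (-6 : ℝ) • u (n-1) + (15/2 : ℝ) • u (n-2) + (-20/3 : ℝ) • u (n-3) + (15/4 : ℝ) • u (n-4) + (-6/5 : ℝ) • u (n-5) + (1/6 : ℝ) • u (n-6)) v + τ * a (u n) v + τ * b (p n) v = τ * Lf n v := by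
    intro n h6 hle v
    have he := (hsol n h6 hle).1 v
    rw [real_inner_smul_left] at he
    have hsum : (∑ i ∈ Finset.range 7, bdfCoeff 6 i • ((u (n - i) : H)))
        = ((((49/20 : ℝ) • u n + (-6 : ℝ) • u (n-1) + (15/2 : ℝ) • u (n-2) + (-20/3 : ℝ) • u (n-3) + (15/4 : ℝ) • u (n-4) + (-6/5 : ℝ) • u (n-5) + (1/6 : ℝ) • u (n-6) : Vh) : H)) := by
      rw [Finset.sum_range_succ, Finset.sum_range_succ, Finset.sum_range_succ, Finset.sum_range_succ,
        Finset.sum_range_succ, Finset.sum_range_succ, Finset.sum_range_succ, Finset.sum_range_zero,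
        bdf6v0, bdf6v1, bdf6v2, bdf6v3, bdf6v4, bdf6v5, bdf6v6, Nat.sub_zero]
      push_cast
      module
    rw [hsum] at he
    rw [hBH, hLfapp]
    have hτ0 : τ ≠ 0 := ne_of_gt hτ
    push_cast at he ⊢
    simp only [neg_div, neg_smul] at he ⊢
    field_simp at he
    linear_combination he
  have hdir : ∀ n, 6 ≤ n → n ≤ N →
      (49/40) * BH (u n) (u n) + (τ/2) * a (u n) (u n) + τ * j (p n) (p n)
      ≤ (τ/2) * φf n ^ 2 + (60/49) * ((36) * BH (u (n-1)) (u (n-1)) + (225/4) * BH (u (n-2)) (u (n-2))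
        + (400/9) * BH (u (n-3)) (u (n-3)) + (225/16) * BH (u (n-4)) (u (n-4))
        + (36/25) * BH (u (n-5)) (u (n-5)) + (1/36) * BH (u (n-6)) (u (n-6))) := by
    intro n h6 hle
    exact startStep BH a b j hsymB hposB hsyma hposa hposj τ (φf n) hτ (hφf n) (Lf n)
      (u (n-6)) (u (n-5)) (u (n-4)) (u (n-3)) (u (n-2)) (u (n-1)) (u n) (p n)
      (heqn n h6 hle) ((hsol n h6 hle).2 (p n)) (hLfb n)
  have hnB : ∀ v : Vh, ‖(v : H)‖ ^ 2 = BH v v := fun v => by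
    rw [hBH]; exact (real_inner_self_eq_norm_sq _).symm
  simp only [hnB]
  rw [Finset.sum_range_succ, Finset.sum_range_succ, Finset.sum_range_succ, Finset.sum_range_succ,
    Finset.sum_range_succ, Finset.sum_range_succ, Finset.sum_range_zero]
  have hcw : (0:ℝ) ≤ cP ^ 2 / ν * τ := mul_nonneg (div_nonneg (sq_nonneg _) hν.le) hτ.le
  have hSF0 : (0:ℝ) ≤ cP ^ 2 / ν * (τ * ∑ n ∈ Finset.Icc 6 N, ‖f n‖ ^ 2) := by positivity
  have hf6 : ‖f 6‖ ^ 2 ≤ ∑ n ∈ Finset.Icc 6 N, ‖f n‖ ^ 2 :=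
    Finset.single_le_sum (f := fun n => ‖f n‖ ^ 2) (fun i _ => sq_nonneg _)
      (Finset.mem_Icc.mpr ⟨le_refl 6, hN⟩)
  have hf6' := mul_le_mul_of_nonneg_left hf6 hcw
  have h6s := hdir 6 (le_refl 6) hN
  rw [hφsq] at h6s
  norm_num at h6s
  have hB0 := hposB (u 0); have hB1 := hposB (u 1); have hB2 := hposB (u 2)
  have hB3 := hposB (u 3); have hB4 := hposB (u 4); have hB5 := hposB (u 5)
  rcases le_or_gt N 8 with hN8 | hN9
  · interval_cases N
    · rw [Finset.Icc_self, Finset.sum_singleton, Finset.sum_singleton, Finset.sum_singleton]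
      have hfp6 : (0:ℝ) ≤ cP ^ 2 / ν * (τ * ‖f 6‖ ^ 2) := by positivity
      linarith [h6s, hfp6, hposB (u 6), mul_nonneg hτ.le (hposa (u 6)), mul_nonneg hτ.le (hposj (p 6))]
    · have hf7 : ‖f 7‖ ^ 2 ≤ ∑ n ∈ Finset.Icc 6 7, ‖f n‖ ^ 2 :=
        Finset.single_le_sum (f := fun n => ‖f n‖ ^ 2) (fun i _ => sq_nonneg _)
          (Finset.mem_Icc.mpr ⟨by norm_num, le_refl 7⟩)
      have hf7' := mul_le_mul_of_nonneg_left hf7 hcw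
      have h7s := hdir 7 (by norm_num) (le_refl 7)
      rw [hφsq] at h7s
      norm_num at h7s
      rw [show Finset.Icc 6 7 = {6, 7} from by decide, Finset.sum_insert (by decide),
        Finset.sum_singleton, Finset.sum_insert (by decide), Finset.sum_singleton,
        Finset.sum_insert (by decide), Finset.sum_singleton]
      have hfp6 : (0:ℝ) ≤ cP ^ 2 / ν * (τ * ‖f 6‖ ^ 2) := by positivity
      have hfp7 : (0:ℝ) ≤ cP ^ 2 / ν * (τ * ‖f 7‖ ^ 2) := by positivity
      linarith [h6s, h7s, hfp6, hfp7, hposB (u 6), hposB (u 7),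
        mul_nonneg hτ.le (hposa (u 6)),
        mul_nonneg hτ.le (hposj (p 6)), mul_nonneg hτ.le (hposa (u 7)), mul_nonneg hτ.le (hposj (p 7))]
    · have hf7 : ‖f 7‖ ^ 2 ≤ ∑ n ∈ Finset.Icc 6 8, ‖f n‖ ^ 2 :=
        Finset.single_le_sum (f := fun n => ‖f n‖ ^ 2) (fun i _ => sq_nonneg _)
          (Finset.mem_Icc.mpr ⟨by norm_num, by norm_num⟩)
      have hf8 : ‖f 8‖ ^ 2 ≤ ∑ n ∈ Finset.Icc 6 8, ‖f n‖ ^ 2 :=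
        Finset.single_le_sum (f := fun n => ‖f n‖ ^ 2) (fun i _ => sq_nonneg _)
          (Finset.mem_Icc.mpr ⟨by norm_num, le_refl 8⟩)
      have hf7' := mul_le_mul_of_nonneg_left hf7 hcw
      have hf8' := mul_le_mul_of_nonneg_left hf8 hcw
      have h7s := hdir 7 (by norm_num) (by norm_num)
      have h8s := hdir 8 (by norm_num) (le_refl 8)
      rw [hφsq] at h7s h8s
      norm_num at h7s h8s
      rw [show Finset.Icc 6 8 = {6, 7, 8} from by decide, Finset.sum_insert (by decide),
        Finset.sum_insert (by decide), Finset.sum_singleton, Finset.sum_insert (by decide),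
        Finset.sum_insert (by decide), Finset.sum_singleton, Finset.sum_insert (by decide),
        Finset.sum_insert (by decide), Finset.sum_singleton]
      have hfp6 : (0:ℝ) ≤ cP ^ 2 / ν * (τ * ‖f 6‖ ^ 2) := by positivity
      have hfp7 : (0:ℝ) ≤ cP ^ 2 / ν * (τ * ‖f 7‖ ^ 2) := by positivity
      have hfp8 : (0:ℝ) ≤ cP ^ 2 / ν * (τ * ‖f 8‖ ^ 2) := by positivity
      linarith [h6s, h7s, h8s, hfp6, hfp7, hfp8, hposB (u 6), hposB (u 7), hposB (u 8),
        mul_nonneg hτ.le (hposa (u 6)),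
        mul_nonneg hτ.le (hposj (p 6)), mul_nonneg hτ.le (hposa (u 7)), mul_nonneg hτ.le (hposj (p 7)),
        mul_nonneg hτ.le (hposa (u 8)), mul_nonneg hτ.le (hposj (p 8))]
  · have h9N : 9 ≤ N := hN9
    have hf7 : ‖f 7‖ ^ 2 ≤ ∑ n ∈ Finset.Icc 6 N, ‖f n‖ ^ 2 :=
      Finset.single_le_sum (f := fun n => ‖f n‖ ^ 2) (fun i _ => sq_nonneg _)
        (Finset.mem_Icc.mpr ⟨by norm_num, by omega⟩)
    have hf8 : ‖f 8‖ ^ 2 ≤ ∑ n ∈ Finset.Icc 6 N, ‖f n‖ ^ 2 :=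
      Finset.single_le_sum (f := fun n => ‖f n‖ ^ 2) (fun i _ => sq_nonneg _)
        (Finset.mem_Icc.mpr ⟨by norm_num, by omega⟩)
    have hf7' := mul_le_mul_of_nonneg_left hf7 hcw
    have hf8' := mul_le_mul_of_nonneg_left hf8 hcw
    have h7s := hdir 7 (by norm_num) (by omega)
    have h8s := hdir 8 (by norm_num) (by omega)
    rw [hφsq] at h7s h8s
    norm_num at h7s h8s
    have hinv : ∀ k, 8 ≤ k → k ≤ N →
      (1/2) * phiB BH (u (k-5)) (u (k-4)) (u (k-3)) (u (k-2)) (u (k-1)) (u k)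
        + τ * psiB a (u (k-2)) (u (k-1)) (u k) + τ * psiB j (p (k-2)) (p (k-1)) (p k)
        + τ * ((29029/864000) * a (u k) (u k) + (3451/216000) * a (u (k-1)) (u (k-1)) + (203/43200) * a (u (k-2)) (u (k-2)))
        + (45191/864000) * τ * (∑ n ∈ Finset.Icc 9 k, (a (u n) (u n) + j (p n) (p n)))
      ≤ (1/2) * phiB BH (u 3) (u 4) (u 5) (u 6) (u 7) (u 8)
        + τ * psiB a (u 6) (u 7) (u 8) + τ * psiB j (p 6) (p 7) (p 8)
        + τ * ((29029/864000) * a (u 8) (u 8) + (3451/216000) * a (u 7) (u 7) + (203/43200) * a (u 6) (u 6))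
        + 60 * τ * (∑ n ∈ Finset.Icc 9 k, φf n ^ 2) := by
      intro k hk
      induction k, hk using Nat.le_induction with
      | base =>
        intro _
        simp only [show Finset.Icc 9 8 = (∅ : Finset ℕ) from by decide, Finset.sum_empty,
          mul_zero, add_zero, show (8:ℕ)-5 = 3 from rfl, show (8:ℕ)-4 = 4 from rfl,
          show (8:ℕ)-3 = 5 from rfl, show (8:ℕ)-2 = 6 from rfl, show (8:ℕ)-1 = 7 from rfl]
        exact le_rfl
      | succ k hk ih =>
        intro hk1
        have hkN : k ≤ N := by omega
        have ih2 := ih hkN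
        have heqk : ∀ v : Vh, BH ((49/20 : ℝ) • u (k+1) + (-6 : ℝ) • u k + (15/2 : ℝ) • u (k-1) + (-20/3 : ℝ) • u (k-2) + (15/4 : ℝ) • u (k-3) + (-6/5 : ℝ) • u (k-4) + (1/6 : ℝ) • u (k-5)) v + τ * a (u (k+1)) v + τ * b (p (k+1)) v
            = τ * Lf (k+1) v := by
          have h := heqn (k+1) (by omega) hk1
          simp only [show k+1-1 = k from by omega, show k+1-2 = k-1 from by omega,
            show k+1-3 = k-2 from by omega, show k+1-4 = k-3 from by omega,
            show k+1-5 = k-4 from by omega, show k+1-6 = k-5 from by omega] at h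
          exact h
        have hstep := stepLemma BH a b j hsymB hposB hsyma hposa hsymj hposj τ (φf (k+1)) hτ
          (hφf (k+1)) (Lf (k+1))
          (u (k-5)) (u (k-4)) (u (k-3)) (u (k-2)) (u (k-1)) (u k) (u (k+1))
          (p (k-2)) (p (k-1)) (p k) (p (k+1))
          heqk
          ((hsol (k+1) (by omega) hk1).2 (p (k+1)))
          ((hsol k (by omega) hkN).2 (p (k+1)))
          ((hsol (k-1) (by omega) (by omega)).2 (p (k+1)))
          ((hsol (k-2) (by omega) (by omega)).2 (p (k+1)))
          (hLfb (k+1))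
        rw [Finset.sum_Icc_succ_top (by omega : 9 ≤ k+1), Finset.sum_Icc_succ_top (by omega : 9 ≤ k+1)]
        simp only [show k+1-1 = k from by omega, show k+1-2 = k-1 from by omega,
          show k+1-3 = k-2 from by omega, show k+1-4 = k-3 from by omega,
          show k+1-5 = k-4 from by omega]
        linarith [ih2, hstep]
    have hfin := hinv N (by omega) (le_refl N)
    simp only [hφsq] at hfin
    rw [← Finset.mul_sum, Finset.sum_add_distrib] at hfin
    have hc4 := cert4 BH hsymB hposB (u (N-5)) (u (N-4)) (u (N-3)) (u (N-2)) (u (N-1)) (u N)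
    have hψa := mul_nonneg hτ.le (cert7 a hsyma hposa (u (N-2)) (u (N-1)) (u N))
    have hψj := mul_nonneg hτ.le (cert7 j hsymj hposj (p (N-2)) (p (N-1)) (p N))
    have haN := mul_nonneg hτ.le (hposa (u N))
    have haN1 := mul_nonneg hτ.le (hposa (u (N-1)))
    have haN2 := mul_nonneg hτ.le (hposa (u (N-2)))
    have hc5 := cert5 BH hsymB hposB (u 3) (u 4) (u 5) (u 6) (u 7) (u 8)
    have hc6a := mul_le_mul_of_nonneg_left (cert6 a hsyma hposa (u 6) (u 7) (u 8)) hτ.le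
    have hc6j := mul_le_mul_of_nonneg_left (cert6 j hsymj hposj (p 6) (p 7) (p 8)) hτ.le
    have hsub : ∑ n ∈ Finset.Icc 9 N, ‖f n‖ ^ 2 ≤ ∑ n ∈ Finset.Icc 6 N, ‖f n‖ ^ 2 :=
      Finset.sum_le_sum_of_subset_of_nonneg (Finset.Icc_subset_Icc_left (by norm_num))
        (fun i _ _ => sq_nonneg _)
    have hsub' := mul_le_mul_of_nonneg_left hsub hcw
    have hsplit : ∀ g : ℕ → ℝ, (∑ n ∈ Finset.Icc 6 N, g n)
        = g 6 + g 7 + g 8 + ∑ n ∈ Finset.Icc 9 N, g n := by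
      intro g
      rw [show Finset.Icc 6 N = Finset.Ioc 5 N from by rw [← Finset.Icc_add_one_left_eq_Ioc]; rfl,
        show Finset.Icc 9 N = Finset.Ioc 8 N from by rw [← Finset.Icc_add_one_left_eq_Ioc]; rfl,
        ← Finset.sum_Ioc_consecutive g (show 5 ≤ 8 by norm_num) (show 8 ≤ N by omega),
        show Finset.Ioc 5 8 = {6, 7, 8} from by decide, Finset.sum_insert (by decide),
        Finset.sum_insert (by decide), Finset.sum_singleton]
      ring
    have hsplita : (∑ n ∈ Finset.Icc 6 N, a (u n) (u n)) = a (u 6) (u 6) + a (u 7) (u 7)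
        + a (u 8) (u 8) + ∑ n ∈ Finset.Icc 9 N, a (u n) (u n) := hsplit _
    have hsplitj : (∑ n ∈ Finset.Icc 6 N, j (p n) (p n)) = j (p 6) (p 6) + j (p 7) (p 7)
        + j (p 8) (p 8) + ∑ n ∈ Finset.Icc 9 N, j (p n) (p n) := hsplit _
    rw [hsplita, hsplitj]
    have hsa9 : (0:ℝ) ≤ ∑ n ∈ Finset.Icc 9 N, a (u n) (u n) :=
      Finset.sum_nonneg fun i _ => hposa _
    have hsj9 : (0:ℝ) ≤ ∑ n ∈ Finset.Icc 9 N, j (p n) (p n) :=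
      Finset.sum_nonneg fun i _ => hposj _
    linarith [hfin, hc4, hψa, hψj, haN, haN1, haN2, hc5, hc6a, hc6j, h6s, h7s, h8s,
      hf6', hf7', hf8', hsub', hSF0, hsa9, hsj9, hposB (u 6), hposB (u 7), hposB (u 8),
      hposB (u N),
      mul_nonneg hτ.le hsa9, mul_nonneg hτ.le hsj9,
      mul_nonneg hτ.le (hposa (u 6)), mul_nonneg hτ.le (hposa (u 7)), mul_nonneg hτ.le (hposa (u 8)),
      mul_nonneg hτ.le (hposj (p 6)), mul_nonneg hτ.le (hposj (p 7)), mul_nonneg hτ.le (hposj (p 8))]
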